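/- With W₀ := ind_{K∩M}^M V_{K∩N}, I₀ := j_{W₀}^{-1}(id), and 𝒮'(b) := j_{W₀}(I₀ ∘ b) for b ∈ End_{C[G]}(ind_K^G V), the following hold: (i) 𝒮' : End_{C[G]}(ind_K^G V) → End_{C[M]}(ind_{K∩M}^M V_{K∩N}) is a homomorphism of unital C-algebras, and I₀ ∘ b = Ind_P^G(𝒮'(b)) ∘ I₀ for all b, where Ind_P^G(a) acts on Ind_P^G W₀ by post-composing functions with a; (ii) for every C[M]-module W and every α ∈ Hom_{C[M]}(ind_{K∩M}^M V_{K∩N}, W), one has j_W(Ind_P^G(α) ∘ I₀) = α; (iii) for every b ∈ End_{C[G]}(ind_K^G V) and every I ∈ Hom_{C[G]}(ind_K^G V, Ind_P^G W), one has j_W(I ∘ b) = j_W(I) ∘ 𝒮'(b). -/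

import Mathlib

open scoped Classical

noncomputable section
namespace Paper

variable {C : Type} [Field C] {G : Type} [Group G]

/-- The compactly induced module `ind_K^G V`, as a `C`-submodule of `G → V`. -/
def cInd (K : Subgroup G) {V : Type} [AddCommGroup V] [Module C V]
    (ρ : Representation C ↥K V) : Submodule C (G → V) where
  carrier := {f | (∀ (k : ↥K) (x : G), f (↑k * x) = ρ k (f x)) ∧
    ∃ S : Finset G, ∀ x : G, f x ≠ 0 → ∃ s ∈ S, ∃ k ∈ K, x = k * s}
  add_mem' := by
    rintro a b ⟨ha1, Sa, ha2⟩ ⟨hb1, Sb, hb2⟩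
    refine ⟨fun k x => by simp [ha1 k x, hb1 k x], Sa ∪ Sb, fun x hx => ?_⟩
    by_cases h : a x ≠ 0
    · obtain ⟨s, hs, k, hk, h'⟩ := ha2 x h
      exact ⟨s, Finset.mem_union_left _ hs, k, hk, h'⟩
    · push_neg at h
      have hbx : b x ≠ 0 := by
        intro hb0; apply hx; simp only [Pi.add_apply, h, hb0, add_zero]
      obtain ⟨s, hs, k, hk, h'⟩ := hb2 x hbx
      exact ⟨s, Finset.mem_union_right _ hs, k, hk, h'⟩
  zero_mem' := ⟨fun k x => by simp, ∅, fun x hx => absurd rfl hx⟩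
  smul_mem' := by
    rintro c a ⟨ha1, Sa, ha2⟩
    refine ⟨fun k x => by simp [ha1 k x], Sa, fun x hx => ?_⟩
    refine ha2 x (fun h0 => hx ?_)
    simp only [Pi.smul_apply, h0, smul_zero]

/-- The (full) induced module `Ind_P^G W`, as a `C`-submodule of `G → W`. -/
def fInd (P : Subgroup G) {W : Type} [AddCommGroup W] [Module C W]
    (τ : Representation C ↥P W) : Submodule C (G → W) where
  carrier := {f | ∀ (p : ↥P) (x : G), f (↑p * x) = τ p (f x)}
  add_mem' := by intro a b ha hb p x; simp [ha p x, hb p x]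
  zero_mem' := by intro p x; simp
  smul_mem' := by intro c a ha p x; simp [ha p x]

/-- Right translation action of `G` on `ind_K^G V`. -/
def cIndRep (K : Subgroup G) {V : Type} [AddCommGroup V] [Module C V]
    (ρ : Representation C ↥K V) : Representation C G ↥(cInd K ρ) where
  toFun g :=
    { toFun := fun f => ⟨fun x => (f : G → V) (x * g), by
        refine ⟨fun k x => ?_, ?_⟩
        · show (f : G → V) ((↑k * x) * g) = ρ k ((f : G → V) (x * g))
          rw [mul_assoc]; exact f.2.1 k (x * g)
        · obtain ⟨S, hS⟩ := f.2.2
          refine ⟨S.image (· * g⁻¹), fun x hx => ?_⟩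
          obtain ⟨s, hs, k, hk, h'⟩ := hS (x * g) hx
          refine ⟨s * g⁻¹, Finset.mem_image_of_mem _ hs, k, hk, ?_⟩
          rw [← mul_assoc, ← h', mul_assoc, mul_inv_cancel, mul_one]⟩
      map_add' := fun a b => rfl
      map_smul' := fun c a => rfl }
  map_one' := by ext f x; simp
  map_mul' := fun a b => by ext f x; simp [mul_assoc]

/-- Right translation action of `G` on `Ind_P^G W`. -/
def fIndRep (P : Subgroup G) {W : Type} [AddCommGroup W] [Module C W]
    (τ : Representation C ↥P W) : Representation C G ↥(fInd P τ) where
  toFun g :=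
    { toFun := fun f => ⟨fun x => (f : G → W) (x * g), by
        intro p x
        show (f : G → W) ((↑p * x) * g) = τ p ((f : G → W) (x * g))
        rw [mul_assoc]; exact f.2 p (x * g)⟩
      map_add' := fun a b => rfl
      map_smul' := fun c a => rfl }
  map_one' := by ext f x; simp
  map_mul' := fun a b => by ext f x; simp [mul_assoc]

/-- Equivariant `C`-linear maps between two representations of a monoid `Γ`. -/
def equivHom {Γ : Type} [Monoid Γ] {X Y : Type} [AddCommGroup X] [Module C X]
    [AddCommGroup Y] [Module C Y] (σ : Representation C Γ X) (τ : Representation C Γ Y) :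
    Submodule C (X →ₗ[C] Y) where
  carrier := {φ | ∀ γ : Γ, φ ∘ₗ σ γ = τ γ ∘ₗ φ}
  add_mem' := by
    intro a b ha hb γ; ext x
    have h1 := LinearMap.congr_fun (ha γ) x
    have h2 := LinearMap.congr_fun (hb γ) x
    simp only [LinearMap.comp_apply] at h1 h2 ⊢
    simp [h1, h2]
  zero_mem' := by intro γ; ext x; simp
  smul_mem' := by
    intro c a ha γ; ext x
    have h1 := LinearMap.congr_fun (ha γ) x
    simp only [LinearMap.comp_apply] at h1 ⊢
    simp [h1]

/-- The element `[1,v]` of `ind_K^G V` : the function supported on `K` with value `v` at `1`. -/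
def unitFn (K : Subgroup G) {V : Type} [AddCommGroup V] [Module C V]
    (ρ : Representation C ↥K V) (v : V) : G → V :=
  fun g => if h : g ∈ K then ρ ⟨g, h⟩ v else 0

lemma unitFn_mem (K : Subgroup G) {V : Type} [AddCommGroup V] [Module C V]
    (ρ : Representation C ↥K V) (v : V) : unitFn K ρ v ∈ cInd K ρ := by
  constructor
  · intro k x
    by_cases hx : x ∈ K
    · have hkx : (↑k * x) ∈ K := mul_mem k.2 hx
      simp only [unitFn, dif_pos hx, dif_pos hkx]
      have : (⟨↑k * x, hkx⟩ : ↥K) = k * ⟨x, hx⟩ := rfl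
      rw [this, map_mul]; rfl
    · have hkx : (↑k * x) ∉ K := by
        intro h
        exact hx (by simpa using mul_mem (inv_mem k.2) h)
      simp [unitFn, dif_neg hx, dif_neg hkx]
  · refine ⟨{1}, fun x hx => ⟨1, Finset.mem_singleton_self 1, x, ?_, (mul_one x).symm⟩⟩
    by_contra hxK
    exact hx (by simp [unitFn, dif_neg hxK])

/-- `[1,v]` as an element of the submodule. -/
def unitElt (K : Subgroup G) {V : Type} [AddCommGroup V] [Module C V]
    (ρ : Representation C ↥K V) (v : V) : ↥(cInd K ρ) :=
  ⟨unitFn K ρ v, unitFn_mem K ρ v⟩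

/-- The subspace of `V` spanned by the elements `ρ(n)v - v`, `n ∈ K ⊓ N`. -/
def coinvKer (K N : Subgroup G) {V : Type} [AddCommGroup V] [Module C V]
    (ρ : Representation C ↥K V) : Submodule C V :=
  Submodule.span C {x | ∃ (n : G) (hn : n ∈ K ⊓ N) (v : V), x = ρ ⟨n, hn.1⟩ v - v}

/-- The representation of `K ⊓ M` on the coinvariants `V_{K ⊓ N}`. -/
def coinvRep (K M N : Subgroup G) {V : Type} [AddCommGroup V] [Module C V]
    (ρ : Representation C ↥K V)
    (hnorm : ∀ (m : ↥(K ⊓ M)) (n : G), n ∈ K ⊓ N → ↑m * n * (↑m)⁻¹ ∈ K ⊓ N) :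
    Representation C ↥(K ⊓ M) (V ⧸ coinvKer K N ρ) where
  toFun m := Submodule.mapQ _ _ (ρ ⟨↑m, m.2.1⟩) (by
    rw [coinvKer, Submodule.span_le]
    rintro x ⟨n, hn, v, rfl⟩
    refine Submodule.mem_comap.mpr ?_
    have key : ρ ⟨↑m, m.2.1⟩ (ρ ⟨n, hn.1⟩ v - v)
        = ρ ⟨↑m * n * (↑m)⁻¹, (hnorm m n hn).1⟩ (ρ ⟨↑m, m.2.1⟩ v) - ρ ⟨↑m, m.2.1⟩ v := by
      rw [map_sub]
      congr 1
      have h2 : (⟨↑m * n * (↑m)⁻¹, (hnorm m n hn).1⟩ : ↥K) * ⟨↑m, m.2.1⟩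
          = ⟨↑m, m.2.1⟩ * ⟨n, hn.1⟩ := by
        ext; simp [mul_assoc]
      calc ρ ⟨↑m, m.2.1⟩ (ρ ⟨n, hn.1⟩ v) = (ρ (⟨↑m, m.2.1⟩ * ⟨n, hn.1⟩)) v := by
            rw [map_mul]; rfl
        _ = ρ (⟨↑m * n * (↑m)⁻¹, (hnorm m n hn).1⟩ * ⟨↑m, m.2.1⟩) v := by rw [h2]
        _ = _ := by rw [map_mul]; rfl
    rw [key]
    exact Submodule.subset_span ⟨↑m * n * (↑m)⁻¹, hnorm m n hn, ρ ⟨↑m, m.2.1⟩ v, rfl⟩)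
  map_one' := by
    refine LinearMap.ext fun x => ?_
    obtain ⟨v, rfl⟩ := Submodule.Quotient.mk_surjective _ x
    rw [Submodule.mapQ_apply]
    have h1 : (⟨((1 : ↥(K ⊓ M)) : G), (1 : ↥(K ⊓ M)).2.1⟩ : ↥K) = 1 := by ext; rfl
    rw [h1, map_one]
    rfl
  map_mul' := by
    intro a b
    refine LinearMap.ext fun x => ?_
    obtain ⟨v, rfl⟩ := Submodule.Quotient.mk_surjective _ x
    have h1 : (⟨((a * b : ↥(K ⊓ M)) : G), (a * b).2.1⟩ : ↥K)
        = ⟨↑a, a.2.1⟩ * ⟨↑b, b.2.1⟩ := by ext; rfl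
    simp only [Submodule.mapQ_apply, Module.End.mul_apply, h1, map_mul]

/-- The inclusion of `(K ⊓ M).subgroupOf M` into `K ⊓ M`. -/
def toKM (K M : Subgroup G) : ↥((K ⊓ M).subgroupOf M) →* ↥(K ⊓ M) where
  toFun x := ⟨↑↑x, x.2⟩
  map_one' := rfl
  map_mul' _ _ := rfl

def rhoBar (K M N : Subgroup G) {V : Type} [AddCommGroup V] [Module C V]
    (ρ : Representation C ↥K V)
    (hnorm : ∀ (m : ↥(K ⊓ M)) (n : G), n ∈ K ⊓ N → ↑m * n * (↑m)⁻¹ ∈ K ⊓ N) :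
    Representation C ↥((K ⊓ M).subgroupOf M) (V ⧸ coinvKer K N ρ) :=
  (coinvRep K M N ρ hnorm).comp (toKM K M)

def cIndBar (K M N : Subgroup G) {V : Type} [AddCommGroup V] [Module C V]
    (ρ : Representation C ↥K V)
    (hnorm : ∀ (m : ↥(K ⊓ M)) (n : G), n ∈ K ⊓ N → ↑m * n * (↑m)⁻¹ ∈ K ⊓ N) :
    Submodule C (↥M → V ⧸ coinvKer K N ρ) :=
  cInd ((K ⊓ M).subgroupOf M) (rhoBar K M N ρ hnorm)

def tauM {P M : Subgroup G} (hMP : M ≤ P) {W : Type} [AddCommGroup W] [Module C W]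
    (τP : Representation C ↥P W) : Representation C ↥M W :=
  τP.comp (Subgroup.inclusion hMP)

/-- The space `Hom_{C[G]}(ind_K^G V, Ind_P^G W)` of intertwiners. -/
def HomG (K P : Subgroup G) {V W : Type} [AddCommGroup V] [Module C V]
    [AddCommGroup W] [Module C W]
    (ρ : Representation C ↥K V) (τP : Representation C ↥P W) :
    Submodule C (↥(cInd K ρ) →ₗ[C] ↥(fInd P τP)) :=
  equivHom (cIndRep K ρ) (fIndRep P τP)

/-- The space `Hom_{C[M]}(ind_{K∩M}^M V_{K∩N}, W)`. -/
def HomBar (K P M N : Subgroup G) (hMP : M ≤ P) {V W : Type} [AddCommGroup V] [Module C V]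
    [AddCommGroup W] [Module C W] (ρ : Representation C ↥K V)
    (hnorm : ∀ (m : ↥(K ⊓ M)) (n' : G), n' ∈ K ⊓ N → ↑m * n' * (↑m)⁻¹ ∈ K ⊓ N)
    (τP : Representation C ↥P W) :
    Submodule C (↥(cIndBar K M N ρ hnorm) →ₗ[C] W) :=
  equivHom (cIndRep ((K ⊓ M).subgroupOf M) (rhoBar K M N ρ hnorm)) (tauM hMP τP)

/-- The element `[1, v̄]` of `ind_{K∩M}^M V_{K∩N}`. -/
def unitBar (K M N : Subgroup G) {V : Type} [AddCommGroup V] [Module C V]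
    (ρ : Representation C ↥K V)
    (hnorm : ∀ (m : ↥(K ⊓ M)) (n' : G), n' ∈ K ⊓ N → ↑m * n' * (↑m)⁻¹ ∈ K ⊓ N)
    (v : V) : ↥(cIndBar K M N ρ hnorm) :=
  unitElt ((K ⊓ M).subgroupOf M) (rhoBar K M N ρ hnorm) (Submodule.Quotient.mk v)

/-- The characterizing property of `j` : `j(I) = u` iff `u([1,v̄]) = (I [1,v])(1)`
for all `v ∈ V`. -/
def charJ (K P M N : Subgroup G) {V W : Type} [AddCommGroup V] [Module C V]
    [AddCommGroup W] [Module C W] (ρ : Representation C ↥K V)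
    (hnorm : ∀ (m : ↥(K ⊓ M)) (n' : G), n' ∈ K ⊓ N → ↑m * n' * (↑m)⁻¹ ∈ K ⊓ N)
    (τP : Representation C ↥P W)
    (I : ↥(cInd K ρ) →ₗ[C] ↥(fInd P τP)) (u : ↥(cIndBar K M N ρ hnorm) →ₗ[C] W) : Prop :=
  ∀ v : V, u (unitBar K M N ρ hnorm v) = (↑(I (unitElt K ρ v)) : G → W) 1


/-- `End_{C[G]}(ind_K^G V)`. -/
def EndG (K : Subgroup G) {V : Type} [AddCommGroup V] [Module C V]
    (ρ : Representation C ↥K V) :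
    Submodule C (↥(cInd K ρ) →ₗ[C] ↥(cInd K ρ)) :=
  equivHom (cIndRep K ρ) (cIndRep K ρ)

/-- `End_{C[M]}(ind_{K∩M}^M V_{K∩N})`. -/
def EndBar (K M N : Subgroup G) {V : Type} [AddCommGroup V] [Module C V]
    (ρ : Representation C ↥K V)
    (hnorm : ∀ (m : ↥(K ⊓ M)) (n' : G), n' ∈ K ⊓ N → ↑m * n' * (↑m)⁻¹ ∈ K ⊓ N) :
    Submodule C (↥(cIndBar K M N ρ hnorm) →ₗ[C] ↥(cIndBar K M N ρ hnorm)) :=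
  equivHom (cIndRep ((K ⊓ M).subgroupOf M) (rhoBar K M N ρ hnorm))
    (cIndRep ((K ⊓ M).subgroupOf M) (rhoBar K M N ρ hnorm))

section General

variable {Γ : Type} [Group Γ] (H : Subgroup Γ) {X : Type} [AddCommGroup X] [Module C X]
  (σ : Representation C ↥H X)

lemma cIndRep_coe (g : Γ) (f : ↥(cInd H σ)) (x : Γ) :
    (↑(cIndRep H σ g f) : Γ → X) x = (↑f : Γ → X) (x * g) := rfl

lemma unitElt_coe (x : X) (g : Γ) :
    (↑(unitElt H σ x) : Γ → X) g = if h : g ∈ H then σ ⟨g, h⟩ x else 0 := rfl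

lemma unitElt_one (x : X) : (↑(unitElt H σ x) : Γ → X) 1 = x := by
  rw [unitElt_coe, dif_pos (one_mem H)]
  have h1 : (⟨1, one_mem H⟩ : ↥H) = 1 := rfl
  rw [h1, map_one, Module.End.one_apply]

lemma unitElt_add (x y : X) :
    unitElt H σ (x + y) = unitElt H σ x + unitElt H σ y := by
  apply Subtype.ext; funext g
  show unitFn H σ (x + y) g = unitFn H σ x g + unitFn H σ y g
  unfold unitFn; split <;> simp

lemma unitElt_smul (c : C) (x : X) :
    unitElt H σ (c • x) = c • unitElt H σ x := by
  apply Subtype.ext; funext g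
  show unitFn H σ (c • x) g = c • unitFn H σ x g
  unfold unitFn; split <;> simp

lemma cIndRep_unitElt (k : ↥H) (x : X) :
    cIndRep H σ ↑k (unitElt H σ x) = unitElt H σ (σ k x) := by
  apply Subtype.ext; funext g
  show unitFn H σ x (g * ↑k) = unitFn H σ (σ k x) g
  unfold unitFn
  by_cases h : g ∈ H
  · rw [dif_pos h, dif_pos (mul_mem h k.2)]
    have h1 : (⟨g * ↑k, mul_mem h k.2⟩ : ↥H) = ⟨g, h⟩ * k := rfl
    rw [h1, map_mul, Module.End.mul_apply]
  · rw [dif_neg h, dif_neg (fun hm => h (by simpa using mul_mem hm (inv_mem k.2)))]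

/-- The set of translates of unit elements. -/
def unitSet : Set ↥(cInd H σ) :=
  Set.range fun p : Γ × X => cIndRep H σ p.1 (unitElt H σ p.2)

lemma mem_span_unitSet (f : ↥(cInd H σ)) :
    f ∈ Submodule.span C (unitSet H σ) := by
  obtain ⟨S, hS⟩ := f.2.2
  induction S using Finset.induction_on generalizing f with
  | empty =>
    have h0 : f = 0 := by
      apply Subtype.ext; funext x
      by_contra hx
      obtain ⟨s, hs, -⟩ := hS x hx
      exact absurd hs (Finset.notMem_empty s)
    rw [h0]; exact zero_mem _
  | @insert a S ha ih =>
    set e := cIndRep H σ a⁻¹ (unitElt H σ ((f : Γ → X) a)) with he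
    have hco : ∀ x, ((f - e : ↥(cInd H σ)) : Γ → X) x = (f : Γ → X) x - (e : Γ → X) x := by
      intro x; rfl
    have hsub : ∀ x, ((f - e : ↥(cInd H σ)) : Γ → X) x ≠ 0 → ∃ s ∈ S, ∃ k ∈ H, x = k * s := by
      intro x hx
      by_cases h : x * a⁻¹ ∈ H
      · exfalso; apply hx
        have h1 : (e : Γ → X) x = σ ⟨x * a⁻¹, h⟩ ((f : Γ → X) a) := by
          rw [he, cIndRep_coe, unitElt_coe, dif_pos h]
        have h2 : (f : Γ → X) x = σ ⟨x * a⁻¹, h⟩ ((f : Γ → X) a) := by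
          have h3 := f.2.1 ⟨x * a⁻¹, h⟩ a
          simpa [mul_assoc] using h3
        rw [hco, h1, h2, sub_self]
      · have hfx : (f : Γ → X) x ≠ 0 := by
          intro h0; apply hx
          have he0 : (e : Γ → X) x = 0 := by
            rw [he, cIndRep_coe, unitElt_coe, dif_neg h]
          rw [hco, h0, he0, sub_zero]
        obtain ⟨s, hs, k, hk, hx'⟩ := hS x hfx
        rcases Finset.mem_insert.mp hs with rfl | hs'
        · exact absurd (by rw [hx']; simpa using hk) h
        · exact ⟨s, hs', k, hk, hx'⟩
    have hmem := ih (f - e) hsub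
    have hfe : f = (f - e) + e := by abel
    rw [hfe]
    exact add_mem hmem (Submodule.subset_span ⟨(a⁻¹, (f : Γ → X) a), rfl⟩)

lemma equivHom_ext {W : Type} [AddCommGroup W] [Module C W] (τ : Representation C Γ W)
    {u u' : ↥(cInd H σ) →ₗ[C] W} (hu : u ∈ equivHom (cIndRep H σ) τ)
    (hu' : u' ∈ equivHom (cIndRep H σ) τ)
    (h : ∀ x, u (unitElt H σ x) = u' (unitElt H σ x)) : u = u' := by
  apply LinearMap.ext; intro f
  refine Submodule.span_induction ?_ ?_ ?_ ?_ (mem_span_unitSet H σ f)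
  · rintro y ⟨⟨g, x⟩, rfl⟩
    have h1 := LinearMap.congr_fun (hu g) (unitElt H σ x)
    have h2 := LinearMap.congr_fun (hu' g) (unitElt H σ x)
    simp only [LinearMap.comp_apply] at h1 h2
    rw [h1, h2, h]
  · simp
  · intro x y _ _ hx hy; rw [map_add, map_add, hx, hy]
  · intro c x _ hx; rw [map_smul, map_smul, hx]

lemma equivHom_comp {Γ' : Type} [Monoid Γ'] {X₁ X₂ X₃ : Type}
    [AddCommGroup X₁] [Module C X₁] [AddCommGroup X₂] [Module C X₂]
    [AddCommGroup X₃] [Module C X₃]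
    {σ₁ : Representation C Γ' X₁} {σ₂ : Representation C Γ' X₂}
    {σ₃ : Representation C Γ' X₃}
    {u : X₂ →ₗ[C] X₃} {u' : X₁ →ₗ[C] X₂}
    (hu : u ∈ equivHom σ₂ σ₃) (hu' : u' ∈ equivHom σ₁ σ₂) :
    u ∘ₗ u' ∈ equivHom σ₁ σ₃ := by
  intro γ
  rw [LinearMap.comp_assoc, hu' γ, ← LinearMap.comp_assoc, hu γ, LinearMap.comp_assoc]

end General
section Frob

variable {Γ : Type} [Group Γ] (H : Subgroup Γ) {X : Type} [AddCommGroup X] [Module C X]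
  (σ : Representation C ↥H X)
  {W : Type} [AddCommGroup W] [Module C W] (τ : Representation C Γ W)
  (φ : X →ₗ[C] W) (hφ : ∀ (h : ↥H) (x : X), φ (σ h x) = τ ↑h (φ x))

/-- The function on right cosets arising from `f` and `φ`. -/
def liftFn (f : ↥(cInd H σ)) : Quotient (QuotientGroup.rightRel H) → W :=
  Quotient.lift (fun g => τ g⁻¹ (φ ((f : Γ → X) g))) (by
    intro x y hxy
    have hxy' : y * x⁻¹ ∈ H := (QuotientGroup.rightRel_apply).mp hxy
    have h1 : (f : Γ → X) y = σ ⟨y * x⁻¹, hxy'⟩ ((f : Γ → X) x) := by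
      have h2 := f.2.1 ⟨y * x⁻¹, hxy'⟩ x
      simpa [mul_assoc] using h2
    show τ x⁻¹ (φ ((f : Γ → X) x)) = τ y⁻¹ (φ ((f : Γ → X) y))
    rw [h1, hφ]
    have h3 : y⁻¹ * (y * x⁻¹) = x⁻¹ := by group
    calc τ x⁻¹ (φ ((f : Γ → X) x))
        = τ (y⁻¹ * (y * x⁻¹)) (φ ((f : Γ → X) x)) := by rw [h3]
      _ = τ y⁻¹ (τ ((⟨y * x⁻¹, hxy'⟩ : ↥H) : Γ) (φ ((f : Γ → X) x))) := by
          rw [map_mul]; rfl)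

lemma liftFn_mk (f : ↥(cInd H σ)) (g : Γ) :
    liftFn H σ τ φ hφ f ⟦g⟧ = τ g⁻¹ (φ ((f : Γ → X) g)) := rfl

lemma liftFn_support (f : ↥(cInd H σ)) :
    (Function.support (liftFn H σ τ φ hφ f)).Finite := by
  obtain ⟨S, hS⟩ := f.2.2
  apply Set.Finite.subset (S.finite_toSet.image (fun s => (⟦s⟧ : Quotient (QuotientGroup.rightRel H))))
  intro c hc
  obtain ⟨g, rfl⟩ := Quotient.exists_rep c
  have hfg : (f : Γ → X) g ≠ 0 := by
    intro h0
    apply hc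
    rw [liftFn_mk, h0, map_zero, map_zero]
  obtain ⟨s, hs, k, hk, rfl⟩ := hS g hfg
  refine ⟨s, hs, Quotient.sound (QuotientGroup.rightRel_apply.mpr (by simpa using hk))⟩

/-- The Frobenius extension of `φ` to `ind_H^Γ X`. -/
def frob : ↥(cInd H σ) →ₗ[C] W where
  toFun f := ∑ᶠ c, liftFn H σ τ φ hφ f c
  map_add' f f' := by
    show (∑ᶠ c, liftFn H σ τ φ hφ (f + f') c)
        = (∑ᶠ c, liftFn H σ τ φ hφ f c) + ∑ᶠ c, liftFn H σ τ φ hφ f' c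
    have h1 : liftFn H σ τ φ hφ (f + f')
        = liftFn H σ τ φ hφ f + liftFn H σ τ φ hφ f' := by
      funext c
      obtain ⟨g, rfl⟩ := Quotient.exists_rep c
      show τ g⁻¹ (φ (((f + f' : ↥(cInd H σ)) : Γ → X) g)) = _
      have h2 : ((f + f' : ↥(cInd H σ)) : Γ → X) g = (f : Γ → X) g + (f' : Γ → X) g := rfl
      rw [h2, map_add, map_add]; rfl
    rw [h1]
    exact finsum_add_distrib (liftFn_support H σ τ φ hφ f) (liftFn_support H σ τ φ hφ f')
  map_smul' c f := by
    show (∑ᶠ x, liftFn H σ τ φ hφ (c • f) x)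
        = c • ∑ᶠ x, liftFn H σ τ φ hφ f x
    have h1 : liftFn H σ τ φ hφ (c • f)
        = fun x => c • liftFn H σ τ φ hφ f x := by
      funext x
      obtain ⟨g, rfl⟩ := Quotient.exists_rep x
      show τ g⁻¹ (φ (((c • f : ↥(cInd H σ)) : Γ → X) g)) = _
      have h2 : ((c • f : ↥(cInd H σ)) : Γ → X) g = c • (f : Γ → X) g := rfl
      rw [h2, map_smul, map_smul]; rfl
    rw [h1, ← smul_finsum' c (liftFn_support H σ τ φ hφ f)]

lemma frob_unitElt (x : X) : frob H σ τ φ hφ (unitElt H σ x) = φ x := by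
  show ∑ᶠ c, liftFn H σ τ φ hφ (unitElt H σ x) c = φ x
  rw [finsum_eq_single _ (⟦1⟧ : Quotient (QuotientGroup.rightRel H)) ?_]
  · rw [liftFn_mk, unitElt_one]
    simp
  · intro c hc
    obtain ⟨g, rfl⟩ := Quotient.exists_rep c
    rw [liftFn_mk, unitElt_coe]
    by_cases h : g ∈ H
    · exact absurd (Quotient.sound (QuotientGroup.rightRel_apply.mpr (by simpa using h))) hc
    · rw [dif_neg h, map_zero, map_zero]

lemma frob_mem : frob H σ τ φ hφ ∈ equivHom (cIndRep H σ) τ := by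
  intro γ
  apply LinearMap.ext; intro f
  simp only [LinearMap.comp_apply]
  show ∑ᶠ c, liftFn H σ τ φ hφ (cIndRep H σ γ f) c
      = τ γ (∑ᶠ c, liftFn H σ τ φ hφ f c)
  have hrel : ∀ (δ : Γ) (a b : Γ), QuotientGroup.rightRel H a b →
      QuotientGroup.rightRel H (a * δ) (b * δ) := by
    intro δ a b hab
    have hab' : b * a⁻¹ ∈ H := QuotientGroup.rightRel_apply.mp hab
    refine QuotientGroup.rightRel_apply.mpr ?_
    simpa [mul_inv_rev, mul_assoc] using hab'
  set e : Quotient (QuotientGroup.rightRel H) ≃ Quotient (QuotientGroup.rightRel H) :=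
    { toFun := Quotient.map (· * γ) (hrel γ)
      invFun := Quotient.map (· * γ⁻¹) (hrel γ⁻¹)
      left_inv := by
        intro c; obtain ⟨g, rfl⟩ := Quotient.exists_rep c
        show (⟦g * γ * γ⁻¹⟧ : Quotient (QuotientGroup.rightRel H)) = ⟦g⟧
        rw [mul_inv_cancel_right]
      right_inv := by
        intro c; obtain ⟨g, rfl⟩ := Quotient.exists_rep c
        show (⟦g * γ⁻¹ * γ⟧ : Quotient (QuotientGroup.rightRel H)) = ⟦g⟧
        rw [inv_mul_cancel_right] } with he
  have key : ∀ c, liftFn H σ τ φ hφ (cIndRep H σ γ f) c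
      = τ γ (liftFn H σ τ φ hφ f (e c)) := by
    intro c; obtain ⟨g, rfl⟩ := Quotient.exists_rep c
    have h0 : e ⟦g⟧ = ⟦g * γ⟧ := rfl
    rw [h0, liftFn_mk, liftFn_mk]
    have h1 : ((cIndRep H σ γ f : ↥(cInd H σ)) : Γ → X) g = (f : Γ → X) (g * γ) := rfl
    rw [h1]
    have h2 : τ γ (τ (g * γ)⁻¹ (φ ((f : Γ → X) (g * γ))))
        = τ (γ * (g * γ)⁻¹) (φ ((f : Γ → X) (g * γ))) := by
      rw [map_mul, Module.End.mul_apply]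
    rw [h2]
    congr 2
    group
  have hfin : (Function.support fun c => liftFn H σ τ φ hφ f (e c)).Finite := by
    have h3 : (Function.support fun c => liftFn H σ τ φ hφ f (e c))
        ⊆ ⇑e ⁻¹' Function.support (liftFn H σ τ φ hφ f) := fun c hc => hc
    exact Set.Finite.subset ((liftFn_support H σ τ φ hφ f).preimage e.injective.injOn) h3
  calc ∑ᶠ c, liftFn H σ τ φ hφ (cIndRep H σ γ f) c
      = ∑ᶠ c, τ γ (liftFn H σ τ φ hφ f (e c)) := finsum_congr key
    _ = τ γ (∑ᶠ c, liftFn H σ τ φ hφ f (e c)) :=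
        ((τ γ).toAddMonoidHom.map_finsum hfin).symm
    _ = τ γ (∑ᶠ c, liftFn H σ τ φ hφ f c) := by rw [finsum_comp_equiv e]

end Frob
section Aux

lemma eval_formula {K P : Subgroup G} {V W : Type} [AddCommGroup V] [Module C V]
    [AddCommGroup W] [Module C W]
    (ρ : Representation C ↥K V) (τ : Representation C ↥P W)
    {I : ↥(cInd K ρ) →ₗ[C] ↥(fInd P τ)} (hI : I ∈ HomG K P ρ τ)
    (v : V) (p : ↥P) (k : ↥K) :
    (↑(I (unitElt K ρ v)) : G → W) (↑p * ↑k)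
      = τ p ((↑(I (unitElt K ρ (ρ k v))) : G → W) 1) := by
  have h1 : (↑(I (unitElt K ρ v)) : G → W) (↑p * ↑k)
      = τ p ((↑(I (unitElt K ρ v)) : G → W) ↑k) := (I (unitElt K ρ v)).2 p ↑k
  have h2 := LinearMap.congr_fun (hI ↑k) (unitElt K ρ v)
  simp only [LinearMap.comp_apply] at h2
  rw [cIndRep_unitElt] at h2
  have h3 : (↑(I (unitElt K ρ (ρ k v))) : G → W) 1
      = (↑(I (unitElt K ρ v)) : G → W) ↑k := by
    rw [h2]
    show (↑(I (unitElt K ρ v)) : G → W) (1 * ↑k) = _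
    rw [one_mul]
  rw [h1, h3]

lemma main_eval {V : Type} [AddCommGroup V] [Module C V]
    (K P M N : Subgroup G) (hMP : M ≤ P) (hNP : N ≤ P)
    (hPprod : ∀ p ∈ P, ∃ m ∈ M, ∃ n' ∈ N, p = m * n')
    (hG : ∀ g : G, ∃ k ∈ K, ∃ p ∈ P, g = k * p)
    (hnorm : ∀ (m : ↥(K ⊓ M)) (n' : G), n' ∈ K ⊓ N → ↑m * n' * (↑m)⁻¹ ∈ K ⊓ N)
    (ρ : Representation C ↥K V)
    (τ₀ : Representation C ↥P ↥(cIndBar K M N ρ hnorm))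
    (hτ₀N : ∀ x : ↥P, (x : G) ∈ N → τ₀ x = 1)
    (hτ₀M : ∀ (x : ↥P) (hx : (x : G) ∈ M),
      τ₀ x = cIndRep ((K ⊓ M).subgroupOf M) (rhoBar K M N ρ hnorm) ⟨↑x, hx⟩)
    {I₀ : ↥(cInd K ρ) →ₗ[C] ↥(fInd P τ₀)} (hI₀mem : I₀ ∈ HomG K P ρ τ₀)
    (hI₀ : charJ K P M N ρ hnorm τ₀ I₀
      (LinearMap.id : ↥(cIndBar K M N ρ hnorm) →ₗ[C] ↥(cIndBar K M N ρ hnorm)))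
    {W : Type} [AddCommGroup W] [Module C W] (τW : Representation C ↥P W)
    (hτWN : ∀ x : ↥P, (x : G) ∈ N → τW x = 1)
    {I : ↥(cInd K ρ) →ₗ[C] ↥(fInd P τW)} (hImem : I ∈ HomG K P ρ τW)
    {w : ↥(cIndBar K M N ρ hnorm) →ₗ[C] W}
    (hwM : ∀ (γ : ↥M) (x : ↥(cIndBar K M N ρ hnorm)),
      w (cIndRep ((K ⊓ M).subgroupOf M) (rhoBar K M N ρ hnorm) γ x)
        = τW ⟨↑γ, hMP γ.2⟩ (w x))
    (hchar : charJ K P M N ρ hnorm τW I w) :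
    ∀ (f : ↥(cInd K ρ)) (g : G),
      (↑(I f) : G → W) g = w ((↑(I₀ f) : G → ↥(cIndBar K M N ρ hnorm)) g) := by
  -- w intertwines τ₀ and τW on all of P
  have hwP : ∀ (p : ↥P) (x : ↥(cIndBar K M N ρ hnorm)),
      w (τ₀ p x) = τW p (w x) := by
    intro p x
    obtain ⟨m, hm, n, hn, hmn⟩ := hPprod ↑p p.2
    have hp : p = (⟨m, hMP hm⟩ : ↥P) * ⟨n, hNP hn⟩ := Subtype.ext hmn
    rw [hp, map_mul, map_mul, hτ₀N ⟨n, hNP hn⟩ hn, hτWN ⟨n, hNP hn⟩ hn,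
      hτ₀M ⟨m, hMP hm⟩ hm]
    simp only [Module.End.mul_apply, Module.End.one_apply]
    exact hwM ⟨m, hm⟩ x
  intro f
  refine Submodule.span_induction ?_ ?_ ?_ ?_ (mem_span_unitSet K ρ f)
  · rintro y ⟨⟨g₀, v⟩, rfl⟩
    intro g
    -- translate by g₀
    have hIg := LinearMap.congr_fun (hImem g₀) (unitElt K ρ v)
    have hI₀g := LinearMap.congr_fun (hI₀mem g₀) (unitElt K ρ v)
    simp only [LinearMap.comp_apply] at hIg hI₀g
    rw [hIg, hI₀g]
    have hL : (↑(fIndRep P τW g₀ (I (unitElt K ρ v))) : G → W) g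
        = (↑(I (unitElt K ρ v)) : G → W) (g * g₀) := rfl
    have hR : (↑(fIndRep P τ₀ g₀ (I₀ (unitElt K ρ v))) : G → ↥(cIndBar K M N ρ hnorm)) g
        = (↑(I₀ (unitElt K ρ v)) : G → ↥(cIndBar K M N ρ hnorm)) (g * g₀) := rfl
    rw [hL, hR]
    -- decompose g * g₀ = p⁻¹ * k⁻¹
    obtain ⟨k, hk, p, hp, hdec⟩ := hG (g * g₀)⁻¹
    have hgg : g * g₀ = ↑(⟨p, hp⟩ : ↥P)⁻¹ * ↑(⟨k, hk⟩ : ↥K)⁻¹ := by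
      have h5 : g * g₀ = ((g * g₀)⁻¹)⁻¹ := (inv_inv _).symm
      rw [h5, hdec, mul_inv_rev]; rfl
    rw [hgg, eval_formula ρ τW hImem v (⟨p, hp⟩ : ↥P)⁻¹ (⟨k, hk⟩ : ↥K)⁻¹,
      eval_formula ρ τ₀ hI₀mem v (⟨p, hp⟩ : ↥P)⁻¹ (⟨k, hk⟩ : ↥K)⁻¹]
    rw [← hchar (ρ (⟨k, hk⟩ : ↥K)⁻¹ v)]
    rw [← hI₀ (ρ (⟨k, hk⟩ : ↥K)⁻¹ v)]
    rw [hwP]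
    rfl
  · intro g; rw [map_zero, map_zero]
    show (0 : G → W) g = w ((0 : G → ↥(cIndBar K M N ρ hnorm)) g)
    rw [Pi.zero_apply, Pi.zero_apply, map_zero]
  · intro x y _ _ hx hy g
    rw [map_add, map_add]
    show ((↑(I x) : G → W) + ↑(I y)) g
        = w (((↑(I₀ x) : G → ↥(cIndBar K M N ρ hnorm)) + ↑(I₀ y)) g)
    rw [Pi.add_apply, Pi.add_apply, map_add, hx g, hy g]
  · intro c x _ hx g
    rw [map_smul, map_smul]
    show (c • (↑(I x) : G → W)) g
        = w ((c • (↑(I₀ x) : G → ↥(cIndBar K M N ρ hnorm))) g)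
    rw [Pi.smul_apply, Pi.smul_apply, map_smul, hx g]

end Aux
/-!
STATEMENT 2.  Setting as in Statement 1.  Let `W₀ := ind_{K∩M}^M V_{K∩N}` (`cIndBar`), with
its `C[P]`-module structure `τ₀` (trivial on `N`, restricting to the right-translation
`M`-action on `W₀`).  `I₀ := j_{W₀}⁻¹(id)` is the unique intertwiner in
`Hom_{C[G]}(ind_K^G V, Ind_P^G W₀)` with `charJ I₀ id` (i.e. `(I₀[1,v])(1) = [1,v̄]`), and
`𝒮'(b) := j_{W₀}(I₀ ∘ b)`, i.e. `u = 𝒮'(b)` iff `u ∈ End_{C[M]}(W₀)` and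
`charJ (I₀ ∘ b) u`.  The theorem asserts:
(i)  `𝒮'` is well defined and is a homomorphism of unital `C`-algebras
     `End_{C[G]}(ind_K^G V) → End_{C[M]}(ind_{K∩M}^M V_{K∩N})`, and
     `I₀ ∘ b = Ind_P^G(𝒮'(b)) ∘ I₀` (pointwise: `(I₀(b f))(g) = 𝒮'(b)((I₀ f)(g))`);
(ii) `j_W(Ind_P^G(α) ∘ I₀) = α` for every `C[M]`-module `W` and `α ∈ Hom_{C[M]}(W₀, W)`
     (using `(Ind_P^G(α) ∘ I₀)([1,v])(1) = α((I₀[1,v])(1))` and the `charJ` description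
     of `j_W`);
(iii) `j_W(I ∘ b) = j_W(I) ∘ 𝒮'(b)`.
-/
set_option maxHeartbeats 2000000 in
theorem statement2 {V : Type} [AddCommGroup V] [Module C V]
    (K P M N : Subgroup G)
    (hMP : M ≤ P) (hNP : N ≤ P)
    (hNnormal : ∀ p ∈ P, ∀ n' ∈ N, p * n' * p⁻¹ ∈ N)
    (hMN : M ⊓ N = ⊥)
    (hPprod : ∀ p ∈ P, ∃ m ∈ M, ∃ n' ∈ N, p = m * n')
    (hG : ∀ g : G, ∃ k ∈ K, ∃ p ∈ P, g = k * p)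
    (hKP : ∀ x ∈ K ⊓ P, ∃ m ∈ K ⊓ M, ∃ n' ∈ K ⊓ N, x = m * n')
    (hnorm : ∀ (m : ↥(K ⊓ M)) (n' : G), n' ∈ K ⊓ N → ↑m * n' * (↑m)⁻¹ ∈ K ⊓ N)
    (ρ : Representation C ↥K V)
    -- the C[P]-module structure τ₀ on W₀ = ind_{K∩M}^M V_{K∩N}
    (τ₀ : Representation C ↥P ↥(cIndBar K M N ρ hnorm))
    (hτ₀N : ∀ x : ↥P, (x : G) ∈ N → τ₀ x = 1)
    (hτ₀M : ∀ (x : ↥P) (hx : (x : G) ∈ M),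
      τ₀ x = cIndRep ((K ⊓ M).subgroupOf M) (rhoBar K M N ρ hnorm) ⟨↑x, hx⟩)
    -- I₀ = j_{W₀}⁻¹(id)
    (I₀ : ↥(cInd K ρ) →ₗ[C] ↥(fInd P τ₀))
    (hI₀mem : I₀ ∈ HomG K P ρ τ₀)
    (hI₀ : charJ K P M N ρ hnorm τ₀ I₀
      (LinearMap.id : ↥(cIndBar K M N ρ hnorm) →ₗ[C] ↥(cIndBar K M N ρ hnorm))) :
    -- (i) 𝒮' is a well-defined map into End_{C[M]} ...
    (∀ b ∈ EndG K ρ, ∃ u : ↥(cIndBar K M N ρ hnorm) →ₗ[C] ↥(cIndBar K M N ρ hnorm), u ∈ EndBar K M N ρ hnorm ∧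
      charJ K P M N ρ hnorm τ₀ (I₀ ∘ₗ b) u) ∧
    (∀ b ∈ EndG K ρ, ∀ u : ↥(cIndBar K M N ρ hnorm) →ₗ[C] ↥(cIndBar K M N ρ hnorm), u ∈ EndBar K M N ρ hnorm → ∀ u' : ↥(cIndBar K M N ρ hnorm) →ₗ[C] ↥(cIndBar K M N ρ hnorm), u' ∈ EndBar K M N ρ hnorm →
      charJ K P M N ρ hnorm τ₀ (I₀ ∘ₗ b) u → charJ K P M N ρ hnorm τ₀ (I₀ ∘ₗ b) u' →
      u = u') ∧
    -- ... which is unital ...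
    (∀ u : ↥(cIndBar K M N ρ hnorm) →ₗ[C] ↥(cIndBar K M N ρ hnorm), u ∈ EndBar K M N ρ hnorm → charJ K P M N ρ hnorm τ₀ I₀ u → u = LinearMap.id) ∧
    -- ... multiplicative ...
    (∀ b ∈ EndG K ρ, ∀ b' ∈ EndG K ρ,
      ∀ u : ↥(cIndBar K M N ρ hnorm) →ₗ[C] ↥(cIndBar K M N ρ hnorm), u ∈ EndBar K M N ρ hnorm → ∀ u' : ↥(cIndBar K M N ρ hnorm) →ₗ[C] ↥(cIndBar K M N ρ hnorm), u' ∈ EndBar K M N ρ hnorm → ∀ u'' : ↥(cIndBar K M N ρ hnorm) →ₗ[C] ↥(cIndBar K M N ρ hnorm), u'' ∈ EndBar K M N ρ hnorm →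
      charJ K P M N ρ hnorm τ₀ (I₀ ∘ₗ b) u → charJ K P M N ρ hnorm τ₀ (I₀ ∘ₗ b') u' →
      charJ K P M N ρ hnorm τ₀ (I₀ ∘ₗ (b ∘ₗ b')) u'' → u'' = u ∘ₗ u') ∧
    -- ... and C-linear
    (∀ b ∈ EndG K ρ, ∀ b' ∈ EndG K ρ,
      ∀ u : ↥(cIndBar K M N ρ hnorm) →ₗ[C] ↥(cIndBar K M N ρ hnorm), u ∈ EndBar K M N ρ hnorm → ∀ u' : ↥(cIndBar K M N ρ hnorm) →ₗ[C] ↥(cIndBar K M N ρ hnorm), u' ∈ EndBar K M N ρ hnorm → ∀ u'' : ↥(cIndBar K M N ρ hnorm) →ₗ[C] ↥(cIndBar K M N ρ hnorm), u'' ∈ EndBar K M N ρ hnorm →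
      charJ K P M N ρ hnorm τ₀ (I₀ ∘ₗ b) u → charJ K P M N ρ hnorm τ₀ (I₀ ∘ₗ b') u' →
      charJ K P M N ρ hnorm τ₀ (I₀ ∘ₗ (b + b')) u'' → u'' = u + u') ∧
    (∀ c : C, ∀ b ∈ EndG K ρ, ∀ u : ↥(cIndBar K M N ρ hnorm) →ₗ[C] ↥(cIndBar K M N ρ hnorm), u ∈ EndBar K M N ρ hnorm → ∀ u' : ↥(cIndBar K M N ρ hnorm) →ₗ[C] ↥(cIndBar K M N ρ hnorm), u' ∈ EndBar K M N ρ hnorm →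
      charJ K P M N ρ hnorm τ₀ (I₀ ∘ₗ b) u → charJ K P M N ρ hnorm τ₀ (I₀ ∘ₗ (c • b)) u' →
      u' = c • u) ∧
    -- the intertwining relation I₀ ∘ b = Ind_P^G(𝒮'(b)) ∘ I₀
    (∀ b ∈ EndG K ρ, ∀ u : ↥(cIndBar K M N ρ hnorm) →ₗ[C] ↥(cIndBar K M N ρ hnorm), u ∈ EndBar K M N ρ hnorm →
      charJ K P M N ρ hnorm τ₀ (I₀ ∘ₗ b) u →
      ∀ (f : ↥(cInd K ρ)) (g : G),
        (↑(I₀ (b f)) : G → ↥(cIndBar K M N ρ hnorm)) g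
          = u ((↑(I₀ f) : G → ↥(cIndBar K M N ρ hnorm)) g)) ∧
    -- (ii) j_W(Ind_P^G(α) ∘ I₀) = α
    (∀ (W : Type) [AddCommGroup W] [Module C W],
      ∀ τW : Representation C ↥P W, (∀ x : ↥P, (x : G) ∈ N → τW x = 1) →
      ∀ α ∈ HomBar K P M N hMP ρ hnorm τW,
      ∀ u ∈ HomBar K P M N hMP ρ hnorm τW,
        (∀ v : V, u (unitBar K M N ρ hnorm v)
            = α ((↑(I₀ (unitElt K ρ v)) : G → ↥(cIndBar K M N ρ hnorm)) 1)) →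
        u = α) ∧
    -- (iii) j_W(I ∘ b) = j_W(I) ∘ 𝒮'(b)
    (∀ (W : Type) [AddCommGroup W] [Module C W],
      ∀ τW : Representation C ↥P W, (∀ x : ↥P, (x : G) ∈ N → τW x = 1) →
      ∀ I ∈ HomG K P ρ τW, ∀ b ∈ EndG K ρ,
      ∀ ub : ↥(cIndBar K M N ρ hnorm) →ₗ[C] ↥(cIndBar K M N ρ hnorm), ub ∈ EndBar K M N ρ hnorm →
        charJ K P M N ρ hnorm τ₀ (I₀ ∘ₗ b) ub →
        ∀ w ∈ HomBar K P M N hMP ρ hnorm τW,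
          charJ K P M N ρ hnorm τW I w →
          ∀ w' ∈ HomBar K P M N hMP ρ hnorm τW,
            charJ K P M N ρ hnorm τW (I ∘ₗ b) w' →
            w' = w ∘ₗ ub) := by
  classical
  -- identity is in EndBar
  have hidmem : (LinearMap.id : ↥(cIndBar K M N ρ hnorm) →ₗ[C] ↥(cIndBar K M N ρ hnorm))
      ∈ EndBar K M N ρ hnorm := by
    intro γ; rw [LinearMap.id_comp, LinearMap.comp_id]
  -- uniqueness principle
  have huniq : ∀ u u' : ↥(cIndBar K M N ρ hnorm) →ₗ[C] ↥(cIndBar K M N ρ hnorm),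
      u ∈ EndBar K M N ρ hnorm → u' ∈ EndBar K M N ρ hnorm →
      (∀ v : V, u (unitBar K M N ρ hnorm v) = u' (unitBar K M N ρ hnorm v)) → u = u' := by
    intro u u' hu hu' h
    refine equivHom_ext ((K ⊓ M).subgroupOf M) (rhoBar K M N ρ hnorm)
      (cIndRep ((K ⊓ M).subgroupOf M) (rhoBar K M N ρ hnorm)) hu hu' ?_
    intro x
    obtain ⟨v, rfl⟩ := Submodule.Quotient.mk_surjective _ x
    exact h v
  -- existence of S'(b)
  have hexists : ∀ b : ↥(cInd K ρ) →ₗ[C] ↥(cInd K ρ), b ∈ EndG K ρ →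
      ∃ u, u ∈ EndBar K M N ρ hnorm ∧ charJ K P M N ρ hnorm τ₀ (I₀ ∘ₗ b) u := by
    intro b hb
    let φ : V →ₗ[C] ↥(cIndBar K M N ρ hnorm) :=
      { toFun := fun v => (↑(I₀ (b (unitElt K ρ v))) : G → ↥(cIndBar K M N ρ hnorm)) 1
        map_add' := by
          intro v v'
          show (↑(I₀ (b (unitElt K ρ (v + v')))) : G → ↥(cIndBar K M N ρ hnorm)) 1
            = (↑(I₀ (b (unitElt K ρ v))) : G → ↥(cIndBar K M N ρ hnorm)) 1
              + (↑(I₀ (b (unitElt K ρ v'))) : G → ↥(cIndBar K M N ρ hnorm)) 1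
          rw [unitElt_add, map_add, map_add]
          rfl
        map_smul' := by
          intro c v
          show (↑(I₀ (b (unitElt K ρ (c • v)))) : G → ↥(cIndBar K M N ρ hnorm)) 1
            = c • (↑(I₀ (b (unitElt K ρ v))) : G → ↥(cIndBar K M N ρ hnorm)) 1
          rw [unitElt_smul, map_smul, map_smul]
          rfl }
    have hEVB : ∀ (k : ↥K) (v : V),
        φ (ρ k v) = (↑(I₀ (b (unitElt K ρ v))) : G → ↥(cIndBar K M N ρ hnorm)) ↑k := by
      intro k v
      show (↑(I₀ (b (unitElt K ρ (ρ k v)))) : G → ↥(cIndBar K M N ρ hnorm)) 1 = _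
      rw [← cIndRep_unitElt]
      have h1 := LinearMap.congr_fun (hb ↑k) (unitElt K ρ v)
      simp only [LinearMap.comp_apply] at h1
      rw [h1]
      have h2 := LinearMap.congr_fun (hI₀mem ↑k) (b (unitElt K ρ v))
      simp only [LinearMap.comp_apply] at h2
      rw [h2]
      show (↑(I₀ (b (unitElt K ρ v))) : G → ↥(cIndBar K M N ρ hnorm)) (1 * ↑k) = _
      rw [one_mul]
    have hker : coinvKer K N ρ ≤ LinearMap.ker φ := by
      refine Submodule.span_le.mpr ?_
      rintro x ⟨n, hn, v, rfl⟩
      rw [SetLike.mem_coe, LinearMap.mem_ker, map_sub]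
      have h6 : φ (ρ ⟨n, hn.1⟩ v)
          = (↑(I₀ (b (unitElt K ρ v))) : G → ↥(cIndBar K M N ρ hnorm)) n := hEVB ⟨n, hn.1⟩ v
      have h3 := (I₀ (b (unitElt K ρ v))).2 ⟨n, hNP hn.2⟩ 1
      rw [hτ₀N ⟨n, hNP hn.2⟩ hn.2, Module.End.one_apply] at h3
      have h3' : (↑(I₀ (b (unitElt K ρ v))) : G → ↥(cIndBar K M N ρ hnorm)) n
          = (↑(I₀ (b (unitElt K ρ v))) : G → ↥(cIndBar K M N ρ hnorm)) 1 := by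
        have h5 : n = (↑(⟨n, hNP hn.2⟩ : ↥P) : G) * 1 := by rw [mul_one]
        rw [h5]; exact h3
      have h4 : φ v = (↑(I₀ (b (unitElt K ρ v))) : G → ↥(cIndBar K M N ρ hnorm)) 1 := rfl
      rw [h6, h3', h4, sub_self]
    let φbar := Submodule.liftQ (coinvKer K N ρ) φ hker
    have hφbar : ∀ (h : ↥((K ⊓ M).subgroupOf M)) (x : V ⧸ coinvKer K N ρ),
        φbar (rhoBar K M N ρ hnorm h x)
          = cIndRep ((K ⊓ M).subgroupOf M) (rhoBar K M N ρ hnorm) ↑h (φbar x) := by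
      intro h x
      obtain ⟨v, rfl⟩ := Submodule.Quotient.mk_surjective _ x
      have hh : ((h : ↥M) : G) ∈ K := (toKM K M h).2.1
      show φ (ρ ⟨((h : ↥M) : G), hh⟩ v)
        = cIndRep ((K ⊓ M).subgroupOf M) (rhoBar K M N ρ hnorm) ↑h (φ v)
      have hhM : ((h : ↥M) : G) ∈ M := (h : ↥M).2
      calc φ (ρ ⟨((h : ↥M) : G), hh⟩ v)
          = (↑(I₀ (b (unitElt K ρ v))) : G → ↥(cIndBar K M N ρ hnorm)) ((h : ↥M) : G) :=
            hEVB ⟨((h : ↥M) : G), hh⟩ v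
        _ = (↑(I₀ (b (unitElt K ρ v))) : G → ↥(cIndBar K M N ρ hnorm)) (((h : ↥M) : G) * 1) := by
            rw [mul_one]
        _ = @id ↥(cIndBar K M N ρ hnorm) (cIndRep ((K ⊓ M).subgroupOf M) (rhoBar K M N ρ hnorm) ↑h
              ((↑(I₀ (b (unitElt K ρ v))) : G → ↥(cIndBar K M N ρ hnorm)) 1)) := by
            have h7 := (I₀ (b (unitElt K ρ v))).2 (⟨((h : ↥M) : G), hMP hhM⟩ : ↥P) 1
            rw [hτ₀M (⟨((h : ↥M) : G), hMP hhM⟩ : ↥P) hhM] at h7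
            exact h7
        _ = @id ↥(cIndBar K M N ρ hnorm) (cIndRep ((K ⊓ M).subgroupOf M) (rhoBar K M N ρ hnorm) ↑h (φ v)) := rfl
    refine ⟨frob ((K ⊓ M).subgroupOf M) (rhoBar K M N ρ hnorm)
      (cIndRep ((K ⊓ M).subgroupOf M) (rhoBar K M N ρ hnorm)) φbar hφbar,
      frob_mem _ _ _ _ _, ?_⟩
    intro v
    show frob ((K ⊓ M).subgroupOf M) (rhoBar K M N ρ hnorm)
      (cIndRep ((K ⊓ M).subgroupOf M) (rhoBar K M N ρ hnorm)) φbar hφbar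
        (unitElt ((K ⊓ M).subgroupOf M) (rhoBar K M N ρ hnorm) (Submodule.Quotient.mk v)) = _
    exact (frob_unitElt _ _ _ _ _ _).trans rfl
  -- the main intertwining computation for S'(b)
  have hMAIN0 : ∀ b : ↥(cInd K ρ) →ₗ[C] ↥(cInd K ρ), b ∈ EndG K ρ →
      ∀ u : ↥(cIndBar K M N ρ hnorm) →ₗ[C] ↥(cIndBar K M N ρ hnorm), u ∈ EndBar K M N ρ hnorm →
      charJ K P M N ρ hnorm τ₀ (I₀ ∘ₗ b) u →
      ∀ (f : ↥(cInd K ρ)) (g : G),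
        (↑(I₀ (b f)) : G → ↥(cIndBar K M N ρ hnorm)) g
          = u ((↑(I₀ f) : G → ↥(cIndBar K M N ρ hnorm)) g) := by
    intro b hb u hu hc
    have hcomp : I₀ ∘ₗ b ∈ HomG K P ρ τ₀ := equivHom_comp hI₀mem hb
    have hwM : ∀ (γ : ↥M) (x : ↥(cIndBar K M N ρ hnorm)),
        u (cIndRep ((K ⊓ M).subgroupOf M) (rhoBar K M N ρ hnorm) γ x)
          = τ₀ ⟨↑γ, hMP γ.2⟩ (u x) := by
      intro γ x
      have h1 := LinearMap.congr_fun (hu γ) x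
      simp only [LinearMap.comp_apply] at h1
      rw [hτ₀M ⟨↑γ, hMP γ.2⟩ γ.2]
      exact h1
    exact main_eval K P M N hMP hNP hPprod hG hnorm ρ τ₀ hτ₀N hτ₀M hI₀mem hI₀ τ₀ hτ₀N
      hcomp hwM hc
  refine ⟨hexists, ?_, ?_, ?_, ?_, ?_, ?_, ?_, ?_⟩
  -- uniqueness
  · intro b hb u hu u' hu' h h'
    exact huniq u u' hu hu' (fun v => (h v).trans (h' v).symm)
  -- unital
  · intro u hu hc
    exact huniq u LinearMap.id hu hidmem (fun v => (hc v).trans (hI₀ v).symm)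
  -- multiplicative
  · intro b hb b' hb' u hu u' hu' u'' hu'' hc hc' hc''
    refine huniq u'' (u ∘ₗ u') hu'' (equivHom_comp hu hu') ?_
    intro v
    calc u'' (unitBar K M N ρ hnorm v)
        = (↑((I₀ ∘ₗ (b ∘ₗ b')) (unitElt K ρ v)) : G → ↥(cIndBar K M N ρ hnorm)) 1 := hc'' v
      _ = u ((↑(I₀ (b' (unitElt K ρ v))) : G → ↥(cIndBar K M N ρ hnorm)) 1) :=
          hMAIN0 b hb u hu hc (b' (unitElt K ρ v)) 1
      _ = u (u' (unitBar K M N ρ hnorm v)) := congrArg u (hc' v).symm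
      _ = (u ∘ₗ u') (unitBar K M N ρ hnorm v) := rfl
  -- additive
  · intro b hb b' hb' u hu u' hu' u'' hu'' hc hc' hc''
    refine huniq u'' (u + u') hu'' (add_mem hu hu') ?_
    intro v
    have h1 : (I₀ ∘ₗ (b + b')) (unitElt K ρ v)
        = I₀ (b (unitElt K ρ v)) + I₀ (b' (unitElt K ρ v)) := by
      simp only [LinearMap.comp_apply, LinearMap.add_apply, map_add]
    calc u'' (unitBar K M N ρ hnorm v)
        = (↑((I₀ ∘ₗ (b + b')) (unitElt K ρ v)) : G → ↥(cIndBar K M N ρ hnorm)) 1 := hc'' v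
      _ = (↑((I₀ ∘ₗ b) (unitElt K ρ v)) : G → ↥(cIndBar K M N ρ hnorm)) 1
            + (↑((I₀ ∘ₗ b') (unitElt K ρ v)) : G → ↥(cIndBar K M N ρ hnorm)) 1 := by
          rw [h1]; rfl
      _ = u (unitBar K M N ρ hnorm v) + u' (unitBar K M N ρ hnorm v) := by
          rw [hc v, hc' v]
      _ = (u + u') (unitBar K M N ρ hnorm v) := rfl
  -- C-linear
  · intro c b hb u hu u' hu' hc hc'
    refine huniq u' (c • u) hu' (Submodule.smul_mem _ c hu) ?_
    intro v
    have h1 : (I₀ ∘ₗ (c • b)) (unitElt K ρ v) = c • I₀ (b (unitElt K ρ v)) := by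
      simp only [LinearMap.comp_apply, LinearMap.smul_apply, map_smul]
    calc u' (unitBar K M N ρ hnorm v)
        = (↑((I₀ ∘ₗ (c • b)) (unitElt K ρ v)) : G → ↥(cIndBar K M N ρ hnorm)) 1 := hc' v
      _ = c • (↑((I₀ ∘ₗ b) (unitElt K ρ v)) : G → ↥(cIndBar K M N ρ hnorm)) 1 := by
          rw [h1]; rfl
      _ = c • u (unitBar K M N ρ hnorm v) := by rw [hc v]
      _ = (c • u) (unitBar K M N ρ hnorm v) := rfl
  -- intertwining relation
  · intro b hb u hu hc
    exact hMAIN0 b hb u hu hc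
  -- (ii)
  · intro W _ _ τW hτWN α hα u hu h
    refine equivHom_ext ((K ⊓ M).subgroupOf M) (rhoBar K M N ρ hnorm) (tauM hMP τW) hu hα ?_
    intro x
    obtain ⟨v, rfl⟩ := Submodule.Quotient.mk_surjective _ x
    calc u (unitElt ((K ⊓ M).subgroupOf M) (rhoBar K M N ρ hnorm) (Submodule.Quotient.mk v))
        = α ((↑(I₀ (unitElt K ρ v)) : G → ↥(cIndBar K M N ρ hnorm)) 1) := h v
      _ = α (unitElt ((K ⊓ M).subgroupOf M) (rhoBar K M N ρ hnorm) (Submodule.Quotient.mk v)) :=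
          congrArg α (hI₀ v).symm
  -- (iii)
  · intro W _ _ τW hτWN I hI b hb ub hub hcub w hw hcw w' hw' hcw'
    have hwM : ∀ (γ : ↥M) (x : ↥(cIndBar K M N ρ hnorm)),
        w (cIndRep ((K ⊓ M).subgroupOf M) (rhoBar K M N ρ hnorm) γ x)
          = τW ⟨↑γ, hMP γ.2⟩ (w x) := by
      intro γ x
      have h1 := LinearMap.congr_fun (hw γ) x
      simp only [LinearMap.comp_apply] at h1
      exact h1
    have hME := main_eval K P M N hMP hNP hPprod hG hnorm ρ τ₀ hτ₀N hτ₀M hI₀mem hI₀ τW hτWN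
      hI hwM hcw
    refine equivHom_ext ((K ⊓ M).subgroupOf M) (rhoBar K M N ρ hnorm) (tauM hMP τW) hw'
      (equivHom_comp hw hub) ?_
    intro x
    obtain ⟨v, rfl⟩ := Submodule.Quotient.mk_surjective _ x
    calc w' (unitElt ((K ⊓ M).subgroupOf M) (rhoBar K M N ρ hnorm) (Submodule.Quotient.mk v))
        = (↑((I ∘ₗ b) (unitElt K ρ v)) : G → W) 1 := hcw' v
      _ = w ((↑(I₀ (b (unitElt K ρ v))) : G → ↥(cIndBar K M N ρ hnorm)) 1) :=
          hME (b (unitElt K ρ v)) 1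
      _ = w (ub (unitBar K M N ρ hnorm v)) := congrArg w (hcub v).symm
      _ = (w ∘ₗ ub) (unitElt ((K ⊓ M).subgroupOf M) (rhoBar K M N ρ hnorm)
            (Submodule.Quotient.mk v)) := rfl

end Paper
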